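/- The diagonal map Δ : K → K Π K admits a global homotopic section (a simplicial map σ : K Π K → K with Δ∘σ in the contiguity class of the identity of K Π K) if and only if K is strongly collapsible. -/
import Mathlib


attribute [local instance] Classical.decEq

/-- An abstract simplicial complex on vertex set `V`. -/
structure SC (V : Type) where
  faces : Set (Finset V)
  down_closed : ∀ {σ τ : Finset V}, σ ∈ faces → τ ⊆ σ → τ.Nonempty → τ ∈ faces

/-- A vertex map inducing a simplicial map `K → L`. -/
def IsSimplicialMap {V W : Type} (K : SC V) (L : SC W) (f : V → W) : Prop :=
  ∀ σ ∈ K.faces, σ.image f ∈ L.faces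

/-- Two maps are contiguous: for each simplex, the union of images is a simplex. -/
def Contiguous {V W : Type} (K : SC V) (L : SC W) (f g : V → W) : Prop :=
  ∀ σ ∈ K.faces, σ.image f ∪ σ.image g ∈ L.faces

/-- Being in the same contiguity class: connected by a finite chain of contiguous maps. -/
def ContigClass {V W : Type} (K : SC V) (L : SC W) : (V → W) → (V → W) → Prop :=
  Relation.ReflTransGen (Contiguous K L)

/-- The categorical product of two simplicial complexes. -/
def prodSC {V W : Type} (K : SC V) (L : SC W) : SC (V × W) where
  faces := {σ | σ.image Prod.fst ∈ K.faces ∧ σ.image Prod.snd ∈ L.faces}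
  down_closed := fun hσ hτσ hne =>
    ⟨K.down_closed hσ.1 (Finset.image_subset_image hτσ) (hne.image _),
     L.down_closed hσ.2 (Finset.image_subset_image hτσ) (hne.image _)⟩

/-- `Ω` is a Farber subcomplex of `K Π K`: a subcomplex admitting a simplicial map
`s : Ω → K` with `Δ ∘ s` in the contiguity class of the inclusion. -/
def IsFarber {V : Type} (K : SC V) (Ω : SC (V × V)) : Prop :=
  Ω.faces ⊆ (prodSC K K).faces ∧
  ∃ s : V × V → V, IsSimplicialMap Ω K s ∧
    ContigClass Ω (prodSC K K) (fun p => (s p, s p)) id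

/-- `K Π K` is covered by `n + 1` Farber subcomplexes. -/
def TCle {V : Type} (K : SC V) (n : ℕ) : Prop :=
  ∃ Ω : Fin (n + 1) → SC (V × V), (∀ i, IsFarber K (Ω i)) ∧
    ∀ σ ∈ (prodSC K K).faces, ∃ i, σ ∈ (Ω i).faces

/-- Discrete topological complexity. -/
noncomputable def TCdisc {V : Type} (K : SC V) : ℕ∞ :=
  sInf {n : ℕ∞ | ∃ m : ℕ, n = (m : ℕ∞) ∧ TCle K m}

/-- A categorical subcomplex: the inclusion is in the contiguity class of a constant map
at a vertex of `K`. -/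
def IsCategorical {V : Type} (K : SC V) (L : SC V) : Prop :=
  L.faces ⊆ K.faces ∧ ∃ v : V, {v} ∈ K.faces ∧ ContigClass L K id (fun _ => v)

/-- `K` is covered by `n + 1` categorical subcomplexes. -/
def scatLe {V : Type} (K : SC V) (n : ℕ) : Prop :=
  ∃ L : Fin (n + 1) → SC V, (∀ i, IsCategorical K (L i)) ∧
    ∀ σ ∈ K.faces, ∃ i, σ ∈ (L i).faces

/-- Normalized simplicial LS-category. -/
noncomputable def scat {V : Type} (K : SC V) : ℕ∞ :=
  sInf {n : ℕ∞ | ∃ m : ℕ, n = (m : ℕ∞) ∧ scatLe K m}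

/-- The preimage subcomplex of a subcomplex `Ω` under a vertex map `f`,
inside an ambient complex `M`. -/
def preimSC {V W : Type} (M : SC W) (Ω : SC V) (f : W → V) : SC W where
  faces := {τ | τ ∈ M.faces ∧ τ.image f ∈ Ω.faces}
  down_closed := fun hσ hτσ hne =>
    ⟨M.down_closed hσ.1 hτσ hne,
     Ω.down_closed hσ.2 (Finset.image_subset_image hτσ) (hne.image _)⟩

/-- `K` and `L` have the same strong homotopy type. -/
def StrongEquiv {V W : Type} (K : SC V) (L : SC W) : Prop :=
  ∃ (φ : V → W) (ψ : W → V), IsSimplicialMap K L φ ∧ IsSimplicialMap L K ψ ∧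
    ContigClass L L (φ ∘ ψ) id ∧ ContigClass K K (ψ ∘ φ) id

/-- `K` is edge-path connected. -/
def EdgeConn {V : Type} (K : SC V) : Prop :=
  ∀ v w : V, {v} ∈ K.faces → {w} ∈ K.faces →
    Relation.ReflTransGen (fun a b => ({a, b} : Finset V) ∈ K.faces) v w

/-- `K` is strongly collapsible: the identity is in the contiguity class of a constant map. -/
def StronglyCollapsible {V : Type} (K : SC V) : Prop :=
  ∃ v : V, {v} ∈ K.faces ∧ ContigClass K K id (fun _ => v)


section Aux

variable {V W X : Type}

lemma contiguous_symm {K : SC V} {L : SC W} {f g : V → W}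
    (h : Contiguous K L f g) : Contiguous K L g f := fun σ hσ => by
  rw [Finset.union_comm]; exact h σ hσ

lemma contigClass_symm {K : SC V} {L : SC W} {f g : V → W}
    (h : ContigClass K L f g) : ContigClass K L g f := by
  induction h with
  | refl => exact .refl
  | tail _ hbc ih => exact Relation.ReflTransGen.head (contiguous_symm hbc) ih

lemma contig_precomp {K : SC V} {L : SC W} {M : SC X} {f g : W → X} {h : V → W}
    (hc : Contiguous L M f g) (hh : IsSimplicialMap K L h) :
    Contiguous K M (f ∘ h) (g ∘ h) := fun σ hσ => by
  have h2 := hc _ (hh σ hσ)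
  convert h2 using 2 <;> (ext x; simp [Function.comp_def])

lemma contigClass_precomp {K : SC V} {L : SC W} {M : SC X} {f g : W → X} {h : V → W}
    (hc : ContigClass L M f g) (hh : IsSimplicialMap K L h) :
    ContigClass K M (f ∘ h) (g ∘ h) := by
  induction hc with
  | refl => exact .refl
  | tail _ hbc ih => exact ih.tail (contig_precomp hbc hh)

lemma contig_postcomp {K : SC V} {L : SC W} {M : SC X} {f g : V → W} {h : W → X}
    (hc : Contiguous K L f g) (hh : IsSimplicialMap L M h) :
    Contiguous K M (h ∘ f) (h ∘ g) := fun σ hσ => by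
  have h2 := hh _ (hc σ hσ)
  convert h2 using 2
  ext x; simp [Function.comp_def]; aesop

lemma contigClass_postcomp {K : SC V} {L : SC W} {M : SC X} {f g : V → W} {h : W → X}
    (hc : ContigClass K L f g) (hh : IsSimplicialMap L M h) :
    ContigClass K M (h ∘ f) (h ∘ g) := by
  induction hc with
  | refl => exact .refl
  | tail _ hbc ih => exact ih.tail (contig_postcomp hbc hh)

/-- lift a contiguity on `K` to `K Π K` via the second coordinate composed with a base map. -/
lemma contig_lift_snd {K : SC V} {f g : V → V} (b : V × V → V)
    (hb : IsSimplicialMap (prodSC K K) K b)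
    (hc : Contiguous K K f g) :
    Contiguous (prodSC K K) (prodSC K K)
      (fun p => (p.1, f (b p))) (fun p => (p.1, g (b p))) := by
  intro σ hσ
  refine ⟨?_, ?_⟩
  · convert hσ.1 using 1
    ext x; simp; aesop
  · convert hc _ (hb σ hσ) using 2
    ext x; simp; aesop

lemma contigClass_lift_snd {K : SC V} {f g : V → V} (b : V × V → V)
    (hb : IsSimplicialMap (prodSC K K) K b)
    (hc : ContigClass K K f g) :
    ContigClass (prodSC K K) (prodSC K K)
      (fun p => (p.1, f (b p))) (fun p => (p.1, g (b p))) := by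
  induction hc with
  | refl => exact .refl
  | tail _ hbc ih => exact ih.tail (contig_lift_snd b hb hbc)

end Aux

/-- the diagonal admits a global homotopic section iff `K` is
strongly collapsible. -/
theorem diagonal_section_iff_stronglyCollapsible {V : Type} (K : SC V)
    (hne : ∃ v : V, {v} ∈ K.faces) :
    (∃ s : V × V → V, IsSimplicialMap (prodSC K K) K s ∧
        ContigClass (prodSC K K) (prodSC K K) (fun p => (s p, s p)) id) ↔
      StronglyCollapsible K := by
  obtain ⟨v₀, hv₀⟩ := hne
  have hfst : IsSimplicialMap (prodSC K K) K Prod.fst := fun σ hσ => hσ.1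
  have hsnd : IsSimplicialMap (prodSC K K) K Prod.snd := fun σ hσ => hσ.2
  constructor
  · rintro ⟨s, hs, hchain⟩
    refine ⟨v₀, hv₀, ?_⟩
    set ι : V → V × V := fun x => (x, v₀) with hι_def
    have hι : IsSimplicialMap K (prodSC K K) ι := by
      intro σ hσ
      rcases σ.eq_empty_or_nonempty with rfl | hσne
      · constructor <;> simpa using hσ
      · constructor
        · convert hσ using 2
          ext x; simp [hι_def]
        · convert hv₀ using 2
          ext x
          simp only [Finset.mem_image, hι_def, Finset.mem_singleton]
          constructor
          · rintro ⟨p, ⟨a, _, rfl⟩, rfl⟩; rfl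
          · rintro rfl
            obtain ⟨a, ha⟩ := hσne
            exact ⟨(a, _), ⟨a, ha, rfl⟩, rfl⟩
    have c1 : ContigClass K K (Prod.fst ∘ (fun p => (s p, s p)) ∘ ι)
        (Prod.fst ∘ id ∘ ι) :=
      contigClass_postcomp (contigClass_precomp hchain hι) hfst
    have c2 : ContigClass K K (Prod.snd ∘ (fun p => (s p, s p)) ∘ ι)
        (Prod.snd ∘ id ∘ ι) :=
      contigClass_postcomp (contigClass_precomp hchain hι) hsnd
    have e1 : (Prod.fst ∘ (fun p : V × V => (s p, s p)) ∘ ι) = fun x => s (ι x) := rfl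
    have e2 : (Prod.fst ∘ id ∘ ι) = (id : V → V) := rfl
    have e3 : (Prod.snd ∘ (fun p : V × V => (s p, s p)) ∘ ι) = fun x => s (ι x) := rfl
    have e4 : (Prod.snd ∘ id ∘ ι) = (fun _ : V => v₀) := rfl
    rw [e1, e2] at c1
    rw [e3, e4] at c2
    exact (contigClass_symm c1).trans c2
  · rintro ⟨v, hv, hchain⟩
    refine ⟨Prod.fst, hfst, ?_⟩
    have A : ContigClass (prodSC K K) (prodSC K K)
        (fun p => (p.1, id (Prod.fst p))) (fun p => (p.1, v)) :=
      contigClass_lift_snd Prod.fst hfst hchain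
    have B : ContigClass (prodSC K K) (prodSC K K)
        (fun p => (p.1, id (Prod.snd p))) (fun p => (p.1, v)) :=
      contigClass_lift_snd Prod.snd hsnd hchain
    have eB : (fun p : V × V => (p.1, id (Prod.snd p))) = (id : V × V → V × V) := rfl
    rw [eB] at B
    exact A.trans (contigClass_symm B)
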